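/- Let $I\subseteq S=K[x_1,\ldots,x_n]$ be a monomial ideal and $\mathbf{m}=(x_1,\ldots,x_n)$. Then $\operatorname{sdepth}(\mathbf{m}^kI)=1$ for all sufficiently large $k$. -/

import Mathlib

open MvPolynomial

/-- A `ℤⁿ`-multigrading (by `K`-subspaces) on a module `M` over the polynomial
ring `S = K[x₁,…,xₙ]`: a direct sum decomposition of `M` into `K`-subspaces indexed
by `ℤⁿ`, such that multiplication by a monomial of exponent `c` maps the component
of degree `a` into the component of degree `a + c`. -/
structure MultiGrading (K : Type*) [Field K] (n : ℕ) (M : Type*) [AddCommGroup M]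
    [Module K M] [Module (MvPolynomial (Fin n) K) M]
    [IsScalarTower K (MvPolynomial (Fin n) K) M] where
  deg : (Fin n → ℤ) → Submodule K M
  isInternal : DirectSum.IsInternal deg
  monomial_smul_mem : ∀ (c : Fin n →₀ ℕ) (a : Fin n → ℤ) (m : M),
    m ∈ deg a → (monomial c (1 : K)) • m ∈ deg (a + fun i => (c i : ℤ))

variable {K : Type*} [Field K] {n : ℕ} {M : Type*} [AddCommGroup M]
  [Module K M] [Module (MvPolynomial (Fin n) K) M]
  [IsScalarTower K (MvPolynomial (Fin n) K) M]

/-- The `K`-subspace `m·K[Z]` of `M`, for `m : M` and a set of variables `Z`: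
the image of the polynomials supported on `Z` under `p ↦ p • m`. -/
noncomputable def stanleySpace (m : M) (Z : Finset (Fin n)) : Submodule K M :=
  Submodule.map ((LinearMap.toSpanSingleton (MvPolynomial (Fin n) K) M m).restrictScalars K)
    (Subalgebra.toSubmodule (MvPolynomial.supported K (↑Z : Set (Fin n))))

/-- A Stanley decomposition of a multigraded module `M`: a finite family of
homogeneous elements `mᵢ` and sets of variables `Zᵢ` such that each `mᵢ·K[Zᵢ]` is a
free `K[Zᵢ]`-module and `M = ⊕ᵢ mᵢ·K[Zᵢ]` as a `K`-vector space. -/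
structure StanleyDecomposition (g : MultiGrading K n M) where
  r : ℕ
  elt : Fin r → M
  Z : Fin r → Finset (Fin n)
  homogeneous : ∀ i, ∃ a, elt i ∈ g.deg a
  free : ∀ i, ∀ p ∈ MvPolynomial.supported K (↑(Z i) : Set (Fin n)), p • elt i = 0 → p = 0
  isInternal : DirectSum.IsInternal fun i => stanleySpace (K := K) (elt i) (Z i)

/-- The Stanley depth of a Stanley decomposition: the minimum of the `|Zᵢ|`. -/
noncomputable def StanleyDecomposition.sdepth {g : MultiGrading K n M}
    (D : StanleyDecomposition g) : ℕ∞ :=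
  ⨅ i, ((D.Z i).card : ℕ∞)

/-- The Stanley depth of a multigraded module: the supremum of the Stanley depths
of its Stanley decompositions. -/
noncomputable def stanleyDepth (g : MultiGrading K n M) : ℕ∞ :=
  ⨆ D : StanleyDecomposition g, D.sdepth

/-- The maximal irrelevant ideal `𝔪 = (x₁,…,xₙ)` of `S = K[x₁,…,xₙ]`. -/
noncomputable def maxIdeal (K : Type*) [Field K] (n : ℕ) : Ideal (MvPolynomial (Fin n) K) :=
  Ideal.span (Set.range X)



section SD15
open Pointwise
variable {K : Type*} [Field K] {n : ℕ}

/-- total degree of an exponent vector -/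
def dg (e : Fin n →₀ ℕ) : ℕ := e.sum fun _ m => m

lemma dg_add (a b : Fin n →₀ ℕ) : dg (a + b) = dg a + dg b := by
  unfold dg; exact Finsupp.sum_add_index' (fun _ => rfl) (fun _ _ _ => rfl)

lemma dg_single (i : Fin n) (m : ℕ) : dg (Finsupp.single i m) = m := by
  unfold dg; exact Finsupp.sum_single_index rfl

lemma apply_le_dg (e : Fin n →₀ ℕ) (i : Fin n) : e i ≤ dg e := by
  by_cases h : i ∈ e.support
  · exact Finset.single_le_sum (f := fun j => e j) (fun _ _ => Nat.zero_le _) h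
  · simp [Finsupp.notMem_support_iff.mp h]

lemma dg_mono {a b : Fin n →₀ ℕ} (h : a ≤ b) : dg a ≤ dg b := by
  obtain ⟨c, rfl⟩ : ∃ c, b = a + c := ⟨b - a, (add_tsub_cancel_of_le h).symm⟩
  simp [dg_add]

lemma dg_eq_zero {e : Fin n →₀ ℕ} (h : dg e = 0) : e = 0 := by
  ext i
  have := apply_le_dg e i
  simp only [Finsupp.coe_zero, Pi.zero_apply]
  omega

lemma exists_le_of_dg_ge {f : Fin n →₀ ℕ} {k : ℕ} (h : k ≤ dg f) :
    ∃ c ≤ f, dg c = k := by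
  induction f using Finsupp.induction generalizing k with
  | zero =>
    refine ⟨0, le_refl _, ?_⟩
    have h0 : dg (0 : Fin n →₀ ℕ) = 0 := by simp [dg]
    omega
  | single_add i m f hif hm ih =>
    rw [show Finsupp.single i m + f = f + Finsupp.single i m by abel, dg_add, dg_single] at h
    by_cases hk : k ≤ dg f
    · obtain ⟨c, hc, hdc⟩ := ih hk
      exact ⟨c, le_trans hc (by simp), hdc⟩
    · obtain ⟨c, hc, hdc⟩ := ih (le_refl (dg f))
      refine ⟨c + Finsupp.single i (k - dg f), ?_, ?_⟩
      · rw [show Finsupp.single i m + f = f + Finsupp.single i m by abel]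
        refine add_le_add hc ?_
        have : k - dg f ≤ m := by omega
        exact Finsupp.single_le_single.mpr this
      · rw [dg_add, dg_single]; omega

lemma dg_eq_one_iff {e : Fin n →₀ ℕ} : dg e = 1 ↔ ∃ i, e = Finsupp.single i 1 := by
  constructor
  · intro h
    have hne : e ≠ 0 := fun h0 => by simp [h0, dg] at h
    obtain ⟨i, hi⟩ := Finsupp.support_nonempty_iff.mpr hne
    have hi' : 0 < e i := Nat.pos_of_ne_zero (Finsupp.mem_support_iff.mp hi)
    refine ⟨i, ?_⟩
    have hsingle : e = Finsupp.single i (e i) := by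
      ext j
      rcases eq_or_ne j i with rfl | hj
      · simp
      · rw [Finsupp.single_apply, if_neg (by exact fun h' => hj h'.symm)]
        by_contra hj0
        have hj' : 0 < e j := Nat.pos_of_ne_zero hj0
        have hsub : ({i, j} : Finset (Fin n)) ⊆ e.support := by
          intro x hx
          simp only [Finset.mem_insert, Finset.mem_singleton] at hx
          rcases hx with rfl | rfl
          · exact hi
          · exact Finsupp.mem_support_iff.mpr (by omega)
        have : e i + e j ≤ dg e := by
          rw [dg, Finsupp.sum]
          calc e i + e j = ∑ x ∈ ({i, j} : Finset (Fin n)), e x := by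
                rw [Finset.sum_insert (by simpa using hj.symm), Finset.sum_singleton]
            _ ≤ _ := Finset.sum_le_sum_of_subset hsub
        omega
    have : e i = 1 := by
      have := hsingle ▸ h
      rwa [dg_single] at this
    rwa [this] at hsingle
  · rintro ⟨i, rfl⟩; exact dg_single i 1

/-- membership in a monomial-generated ideal, via supports -/
lemma mem_span_monomials_iff (A : Set (Fin n →₀ ℕ)) (p : MvPolynomial (Fin n) K) :
    p ∈ Ideal.span ((fun c => monomial c (1 : K)) '' A) ↔
      ∀ e ∈ p.support, ∃ a ∈ A, a ≤ e := by
  classical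
  constructor
  · intro hp
    let R : Ideal (MvPolynomial (Fin n) K) :=
      { carrier := {q | ∀ e ∈ q.support, ∃ a ∈ A, a ≤ e}
        zero_mem' := by simp
        add_mem' := by
          intro q1 q2 h1 h2 e he
          rcases Finset.mem_union.mp (Finsupp.support_add he) with h | h
          · exact h1 e h
          · exact h2 e h
        smul_mem' := by
          intro q1 q2 h2 e he
          simp only [smul_eq_mul] at he
          obtain ⟨e1, he1, e2, he2, rfl⟩ := Finset.mem_add.mp (support_mul q1 q2 he)
          obtain ⟨a, ha, hle⟩ := h2 e2 he2
          exact ⟨a, ha, le_trans hle (by simp)⟩ }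
    have : p ∈ R := by
      refine Ideal.span_le.mpr ?_ hp
      rintro q ⟨c, hc, rfl⟩
      intro e he
      rw [support_monomial, if_neg (one_ne_zero)] at he
      simp only [Finset.mem_singleton] at he
      exact ⟨c, hc, le_of_eq he.symm⟩
    exact this
  · intro hp
    classical
    generalize hs : p.support = s
    induction s using Finset.strongInduction generalizing p with
    | _ s ih =>
      subst hs
      by_cases h0 : p = 0
      · simp [h0]
      · have hsne : p.support.Nonempty := Finset.nonempty_iff_ne_empty.mpr (by simpa using h0)
        obtain ⟨e, he⟩ := hsne
        obtain ⟨a, ha, hle⟩ := hp e he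
        set q := p - monomial e (coeff e p) with hq
        have hqsupp : q.support ⊆ p.support.erase e := by
          intro x hx
          rw [Finset.mem_erase]
          have hxq : coeff x q ≠ 0 := Finsupp.mem_support_iff.mp hx
          constructor
          · rintro rfl
            simp [hq, coeff_sub, coeff_monomial] at hxq
          · rw [MvPolynomial.mem_support_iff]
            intro hxp
            apply hxq
            simp [hq, coeff_sub, coeff_monomial, hxp]
            intro h; rw [← h] at hxp; simp [hxp]
      -- q ∈ span by induction
        have hq_mem : q ∈ Ideal.span ((fun c => monomial c (1 : K)) '' A) := by
          refine ih q.support ?_ q ?_ rfl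
          · exact Finset.ssubset_of_subset_of_ssubset hqsupp (Finset.erase_ssubset he)
          · intro x hx
            exact hp x (Finset.mem_of_mem_erase (hqsupp hx))
        have hm_mem : monomial e (coeff e p) ∈ Ideal.span ((fun c => monomial c (1 : K)) '' A) := by
          have : monomial e (coeff e p) = monomial (e - a) (coeff e p) * monomial a 1 := by
            rw [monomial_mul, mul_one, tsub_add_cancel_of_le hle]
          rw [this]
          exact Ideal.mul_mem_left _ _ (Ideal.subset_span ⟨a, ha, rfl⟩)
        have : p = q + monomial e (coeff e p) := by rw [hq]; ring
        rw [this]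
        exact Ideal.add_mem _ hq_mem hm_mem

lemma monomial_mem_span_iff (A : Set (Fin n →₀ ℕ)) (e : Fin n →₀ ℕ) :
    monomial e (1 : K) ∈ Ideal.span ((fun c => monomial c (1 : K)) '' A) ↔
      ∃ a ∈ A, a ≤ e := by
  classical
  rw [mem_span_monomials_iff]
  constructor
  · intro h
    exact h e (by rw [support_monomial, if_neg one_ne_zero]; simp)
  · intro h x hx
    rw [support_monomial, if_neg one_ne_zero, Finset.mem_singleton] at hx
    exact hx ▸ h

/-- span of monomials is multiplicative -/
lemma span_monomials_mul (A B : Set (Fin n →₀ ℕ)) :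
    Ideal.span ((fun c => monomial c (1 : K)) '' A) * Ideal.span ((fun c => monomial c (1 : K)) '' B)
      = Ideal.span ((fun c => monomial c (1 : K)) '' (A + B)) := by
  rw [Ideal.span_mul_span]
  congr 1
  ext q
  constructor
  · rintro ⟨s, ⟨a, ha, rfl⟩, t, ⟨b, hb, rfl⟩, hq⟩
    subst hq
    exact ⟨a + b, ⟨a, ha, b, hb, rfl⟩, by beta_reduce; rw [monomial_mul, one_mul]⟩
  · rintro ⟨c, ⟨a, ha, b, hb, rfl⟩, rfl⟩
    exact ⟨monomial a 1, ⟨a, ha, rfl⟩, monomial b 1, ⟨b, hb, rfl⟩, by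
      beta_reduce; rw [monomial_mul, one_mul]⟩

lemma maxIdeal_eq_span (hn : 0 < n) : maxIdeal K n =
    Ideal.span ((fun c => monomial c (1 : K)) '' {c | dg c = 1}) := by
  unfold maxIdeal
  congr 1
  ext q
  constructor
  · rintro ⟨i, rfl⟩
    exact ⟨Finsupp.single i 1, dg_single i 1, by rw [X]⟩
  · rintro ⟨c, hc, rfl⟩
    obtain ⟨i, rfl⟩ := dg_eq_one_iff.mp hc
    exact ⟨i, by rw [X]⟩

lemma dg_level_add (a b : ℕ) (hn : 0 < n) :
    ({c | dg c = a} + {c | dg c = b} : Set (Fin n →₀ ℕ)) = {c | dg c = a + b} := by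
  ext e
  constructor
  · rintro ⟨c1, h1, c2, h2, rfl⟩
    simp only [Set.mem_setOf_eq] at *
    rw [dg_add, h1, h2]
  · intro he
    simp only [Set.mem_setOf_eq] at he
    obtain ⟨c, hc, hdc⟩ := exists_le_of_dg_ge (show a ≤ dg e by omega)
    refine ⟨c, hdc, e - c, ?_, add_tsub_cancel_of_le hc⟩
    simp only [Set.mem_setOf_eq]
    have : dg e = dg c + dg (e - c) := by
      conv_lhs => rw [← add_tsub_cancel_of_le hc, dg_add]
    omega

lemma maxIdeal_pow (hn : 0 < n) (k : ℕ) : maxIdeal K n ^ k =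
    Ideal.span ((fun c => monomial c (1 : K)) '' {c | dg c = k}) := by
  induction k with
  | zero =>
    simp only [pow_zero]
    have : ({c | dg c = 0} : Set (Fin n →₀ ℕ)) = {0} := by
      ext c; simp only [Set.mem_setOf_eq, Set.mem_singleton_iff]
      exact ⟨dg_eq_zero, by rintro rfl; simp [dg]⟩
    rw [this]
    have himg : ((fun c => monomial c (1 : K)) '' {(0 : Fin n →₀ ℕ)}) = {(1 : MvPolynomial (Fin n) K)} := by
      rw [Set.image_singleton]
      norm_num [monomial_zero']
    rw [himg, Ideal.span_singleton_one]
    exact Ideal.one_eq_top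
  | succ k ih =>
    rw [pow_succ, ih, maxIdeal_eq_span hn, span_monomials_mul, dg_level_add k 1 hn]


section Modules
variable {J : Ideal (MvPolynomial (Fin n) K)}

/-- the `K`-submodule of `J` of elements supported in a set `T` of exponents -/
def suppSub (J : Ideal (MvPolynomial (Fin n) K)) (T : Set (Fin n →₀ ℕ)) : Submodule K ↥J where
  carrier := {m | ∀ e ∈ (m : MvPolynomial (Fin n) K).support, e ∈ T}
  zero_mem' := by simp
  add_mem' := by
    intro a b ha hb e he
    rw [Submodule.coe_add] at he
    rcases Finset.mem_union.mp (Finsupp.support_add he) with h | h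
    · exact ha e h
    · exact hb e h
  smul_mem' := by
    intro c m hm e he
    rw [Submodule.coe_smul_of_tower] at he
    exact hm e (support_smul he)

lemma suppSub_mono {T T' : Set (Fin n →₀ ℕ)} (h : T ⊆ T') : suppSub J T ≤ suppSub J T' :=
  fun _ hm e he => h (hm e he)

lemma coe_poly_smul (p : MvPolynomial (Fin n) K) (m : ↥J) :
    ((p • m : ↥J) : MvPolynomial (Fin n) K) = p * (m : MvPolynomial (Fin n) K) := rfl

lemma mem_stanleySpace_iff (m₀ m : ↥J) (Z : Finset (Fin n)) :
    m ∈ stanleySpace (K := K) m₀ Z ↔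
      ∃ p ∈ supported K (↑Z : Set (Fin n)), p • m₀ = m := by
  unfold stanleySpace
  rw [Submodule.mem_map]
  constructor
  · rintro ⟨p, hp, rfl⟩
    exact ⟨p, (Subalgebra.mem_toSubmodule _).mp hp, rfl⟩
  · rintro ⟨p, hp, rfl⟩
    exact ⟨p, (Subalgebra.mem_toSubmodule _).mpr hp, rfl⟩

lemma stanleySpace_le_suppSub {m₀ : ↥J} {t : K} {c : Fin n →₀ ℕ}
    (hm₀ : (m₀ : MvPolynomial (Fin n) K) = t • monomial c (1 : K)) (Z : Finset (Fin n)) :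
    stanleySpace (K := K) m₀ Z ≤ suppSub J {e | ∃ s : Fin n →₀ ℕ, ↑s.support ⊆ (↑Z : Set (Fin n)) ∧ e = c + s} := by
  classical
  intro m hm
  obtain ⟨p, hp, rfl⟩ := (mem_stanleySpace_iff m₀ m Z).mp hm
  intro e he
  rw [coe_poly_smul, hm₀] at he
  have h1 : (p * (t • monomial c (1:K))).support ⊆ p.support + (t • monomial c (1:K)).support :=
    support_mul _ _
  obtain ⟨d, hd, c', hc', rfl⟩ := Finset.mem_add.mp (h1 he)
  have hc'c : c' = c := by
    have := support_smul (a := t) (f := monomial c (1:K)) hc'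
    rw [support_monomial, if_neg one_ne_zero, Finset.mem_singleton] at this
    exact this
  subst hc'c
  refine ⟨d, ?_, add_comm d c'⟩
  intro i hi
  exact (mem_supported.mp hp) (by
    exact_mod_cast Finset.mem_coe.mpr ((mem_vars i).mpr ⟨d, hd, by exact_mod_cast hi⟩))

lemma monomial_mem_stanleySpace {m₀ : ↥J} {t : K} {c : Fin n →₀ ℕ}
    (hm₀ : (m₀ : MvPolynomial (Fin n) K) = t • monomial c (1 : K)) (ht : t ≠ 0)
    {Z : Finset (Fin n)} {s : Fin n →₀ ℕ} (hs : ↑s.support ⊆ (↑Z : Set (Fin n)))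
    (he : monomial (c + s) (1 : K) ∈ J) :
    (⟨monomial (c + s) 1, he⟩ : ↥J) ∈ stanleySpace (K := K) m₀ Z := by
  rw [mem_stanleySpace_iff]
  refine ⟨monomial s t⁻¹, ?_, ?_⟩
  · rw [mem_supported, vars_monomial (inv_ne_zero ht)]
    exact hs
  · apply Subtype.ext
    rw [coe_poly_smul, hm₀, smul_monomial, smul_eq_mul, mul_one, monomial_mul]
    rw [add_comm s c]
    congr 1
    field_simp

lemma mem_iSup_of_mono (hJmono : ∀ p ∈ J, ∀ e ∈ p.support, monomial e (1:K) ∈ J)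
    {ι : Type*} (N : ι → Submodule K ↥J)
    (hcov : ∀ (e : Fin n →₀ ℕ) (he : monomial e (1:K) ∈ J), ∃ i, (⟨monomial e 1, he⟩ : ↥J) ∈ N i) :
    ∀ (m : ↥J), m ∈ ⨆ i, N i := by
  classical
  suffices H : ∀ (s : Finset (Fin n →₀ ℕ)) (p : MvPolynomial (Fin n) K) (hp : p ∈ J),
      p.support = s → (⟨p, hp⟩ : ↥J) ∈ ⨆ i, N i by
    intro m
    exact H (m : MvPolynomial (Fin n) K).support m m.2 rfl
  intro s
  induction s using Finset.strongInduction with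
  | _ s ih =>
    intro p hp hs
    by_cases h0 : p = 0
    · have : (⟨p, hp⟩ : ↥J) = 0 := Subtype.ext h0
      rw [this]; exact Submodule.zero_mem _
    · obtain ⟨e, he⟩ := (Finset.nonempty_iff_ne_empty (s := p.support)).mpr (by simpa using h0)
      have hmJ : monomial e (1:K) ∈ J := hJmono p hp e he
      set q := p - monomial e (coeff e p) with hqdef
      have hqJ : q ∈ J := by
        apply Submodule.sub_mem _ hp
        have h2 : monomial e (coeff e p) = (coeff e p) • monomial e (1:K) := by
          rw [smul_monomial, smul_eq_mul, mul_one]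
        rw [h2]
        exact Submodule.smul_of_tower_mem _ _ hmJ
      have hqsupp : q.support ⊆ p.support.erase e := by
        intro x hx
        rw [Finset.mem_erase]
        have hxq : coeff x q ≠ 0 := MvPolynomial.mem_support_iff.mp hx
        constructor
        · rintro rfl
          simp [hqdef, coeff_sub, coeff_monomial] at hxq
        · rw [MvPolynomial.mem_support_iff]
          intro hxp
          apply hxq
          simp [hqdef, coeff_sub, coeff_monomial, hxp]
          intro h; rw [← h] at hxp; simp [hxp]
      have hq_mem : (⟨q, hqJ⟩ : ↥J) ∈ ⨆ i, N i := by
        refine ih q.support ?_ q hqJ rfl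
        rw [← hs]
        exact Finset.ssubset_of_subset_of_ssubset hqsupp (Finset.erase_ssubset he)
      obtain ⟨i, hi⟩ := hcov e hmJ
      have key : (⟨p, hp⟩ : ↥J) = (coeff e p) • (⟨monomial e 1, hmJ⟩ : ↥J) + ⟨q, hqJ⟩ := by
        apply Subtype.ext
        rw [Submodule.coe_add, Submodule.coe_smul_of_tower]
        simp only [hqdef, smul_monomial, smul_eq_mul, mul_one]
        ring
      rw [key]
      exact Submodule.add_mem _
        (Submodule.smul_mem _ _ (le_iSup N i hi)) hq_mem

end Modules

/-- sandwich lemma : an internal grading is determined by any spanning refinement -/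
lemma sandwich {M : Type*} [AddCommGroup M] [Module K M] {ι : Type*} [DecidableEq ι]
    (deg N : ι → Submodule K M) (hint : DirectSum.IsInternal deg) (hle : ∀ a, N a ≤ deg a)
    (htop : ⨆ a, N a = ⊤) (a : ι) : deg a = N a := by
  refine le_antisymm ?_ (hle a)
  intro x hx
  have hx' : x ∈ ⨆ i, N i := htop ▸ Submodule.mem_top
  obtain ⟨f, hf, hsum⟩ := (Submodule.mem_iSup_iff_exists_finsupp N x).mp hx'
  have hrest : x - f a ∈ ⨆ (i : ι) (_ : i ≠ a), deg i := by
    have : x - f a = (f.erase a).sum fun _ m => m := by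
      rw [← hsum, ← Finsupp.add_sum_erase' f a (fun _ m => m) (fun _ => rfl)]
      abel
    rw [this, Finsupp.sum]
    apply Submodule.sum_mem
    intro i hi
    have hia : i ≠ a := by
      intro h; subst h; simp at hi
    have : (f.erase a) i ∈ deg i := by
      rw [Finsupp.erase_ne hia]
      exact hle i (hf i)
    exact Submodule.mem_iSup_of_mem i (Submodule.mem_iSup_of_mem hia this)
  have hdega : x - f a ∈ deg a := Submodule.sub_mem _ hx (hle a (hf a))
  have hzero : x - f a = 0 := by
    have hdisj := (hint.submodule_iSupIndep (i := a))
    exact Submodule.disjoint_def.mp hdisj _ hdega hrest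
  have : x = f a := by
    have := sub_eq_zero.mp hzero; exact this
  rw [this]
  exact hf a


/-- rigidity: in a multigrading of a monomial ideal in which monomials are homogeneous,
every homogeneous element is a scalar multiple of a monomial -/
lemma grading_rigid {J : Ideal (MvPolynomial (Fin n) K)}
    (hJmono : ∀ p ∈ J, ∀ e ∈ p.support, monomial e (1:K) ∈ J)
    (g : MultiGrading K n ↥J)
    (hg : ∀ (c : Fin n →₀ ℕ) (hc : monomial c (1 : K) ∈ J),
      (⟨monomial c 1, hc⟩ : ↥J) ∈ g.deg (fun i => (c i : ℤ)))
    (a : Fin n → ℤ) (m : ↥J) (hm : m ∈ g.deg a) :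
    m = 0 ∨ ∃ (c : Fin n →₀ ℕ) (hc : monomial c (1:K) ∈ J) (t : K), t ≠ 0 ∧
      (a = fun i => (c i : ℤ)) ∧ m = t • (⟨monomial c 1, hc⟩ : ↥J) := by
  classical
  set N : (Fin n → ℤ) → Submodule K ↥J := fun a =>
    ⨆ (c : Fin n →₀ ℕ) (h : (fun i => (c i : ℤ)) = a ∧ monomial c (1:K) ∈ J),
      Submodule.span K {(⟨monomial c 1, h.2⟩ : ↥J)} with hN
  have hle : ∀ a, N a ≤ g.deg a := by
    intro a
    refine iSup_le fun c => iSup_le fun h => ?_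
    rw [Submodule.span_le, Set.singleton_subset_iff]
    exact h.1 ▸ hg c h.2
  have htop : ⨆ a, N a = ⊤ := by
    rw [eq_top_iff]
    intro m _
    refine mem_iSup_of_mono hJmono N ?_ m
    intro e he
    refine ⟨fun i => (e i : ℤ), ?_⟩
    exact Submodule.mem_iSup_of_mem e (Submodule.mem_iSup_of_mem ⟨rfl, he⟩
      (Submodule.mem_span_singleton_self _))
  have hdeg : g.deg a = N a := sandwich g.deg N g.isInternal hle htop a
  rw [hdeg] at hm
  by_cases hex : ∃ c : Fin n →₀ ℕ, (fun i => (c i : ℤ)) = a ∧ monomial c (1:K) ∈ J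
  · obtain ⟨c₀, hc₀⟩ := hex
    have hNa : N a = Submodule.span K {(⟨monomial c₀ 1, hc₀.2⟩ : ↥J)} := by
      refine le_antisymm (iSup_le fun c => iSup_le fun h => ?_)
        (le_iSup_of_le c₀ (le_iSup_of_le hc₀ (le_refl _)))
      have hcc : c = c₀ := by
        ext i
        have := congrFun (h.1.trans hc₀.1.symm) i
        exact_mod_cast this
      subst hcc
      exact le_refl _
    rw [hNa, Submodule.mem_span_singleton] at hm
    obtain ⟨t, ht⟩ := hm
    by_cases ht0 : t = 0
    · left; rw [← ht, ht0, zero_smul]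
    · right; exact ⟨c₀, hc₀.2, t, ht0, hc₀.1.symm, ht.symm⟩
  · have hNa : N a ≤ ⊥ := iSup_le fun c => iSup_le fun h => absurd ⟨c, h.1, h.2⟩ hex
    left
    simpa using hNa hm

/-- counting exponent vectors of a given degree -/
lemma finite_dg_eq (t : ℕ) : Finite {e : Fin n →₀ ℕ // dg e = t} := by
  refine Finite.of_injective (fun e => (fun i => (⟨e.1 i, ?_⟩ : Fin (t+1)))) ?_
  · have h1 := apply_le_dg e.1 i
    have h2 := e.2
    omega
  · intro e e' h
    apply Subtype.ext
    ext i
    exact congrArg Fin.val (congrFun h i)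

lemma finite_box (d : ℕ) : ({u : Fin n →₀ ℕ | ∀ i, u i ≤ d}).Finite := by
  rw [← Set.finite_coe_iff]
  refine Finite.of_injective (fun e => (fun i => (⟨e.1 i, by
    have := e.2 i; omega⟩ : Fin (d+1)))) ?_
  intro e e' h
  apply Subtype.ext
  ext i
  exact congrArg Fin.val (congrFun h i)

lemma card_dg_eq (hn : 0 < n) (t : ℕ) :
    Nat.card {e : Fin n →₀ ℕ // dg e = t} = (t + (n-1)).choose (n-1) := by
  classical
  have hEquiv : {e : Fin n →₀ ℕ // dg e = t} ≃ Sym (Fin n) t := by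
    refine Equiv.subtypeEquiv (Multiset.toFinsupp (α := Fin n)).symm.toEquiv ?_
    intro e
    change dg e = t ↔ Multiset.card (Multiset.toFinsupp.symm.toEquiv e) = t
    have : Multiset.card (Multiset.toFinsupp.symm.toEquiv e) = Multiset.card (Finsupp.toMultiset e) := by
      congr 1
    rw [this, Finsupp.card_toMultiset]
    rfl
  rw [Nat.card_congr hEquiv, Nat.card_eq_fintype_card, Sym.card_sym_eq_multichoose,
    Fintype.card_fin, Nat.multichoose_eq]
  have h1 : n + t - 1 = t + (n - 1) := by omega
  rw [h1]
  have h2 := Nat.choose_symm (n := t + (n-1)) (k := t) (by omega)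
  rw [show t + (n-1) - t = n - 1 by omega] at h2
  exact h2.symm

/-- numeric helper: `(k+a)^c ≤ k^c + c·a·(k+a)^(c-1)` -/
lemma pow_add_le (a c k : ℕ) : (k+a)^c ≤ k^c + c*a*(k+a)^(c-1) := by
  induction c with
  | zero => simp
  | succ c ih =>
    rcases Nat.eq_zero_or_pos c with rfl | hc
    · simp
    have h3 : (k+a)^(c-1)*(k+a) ≤ (k+a)^c := by
      have he : (k+a)^(c-1)*(k+a) = (k+a)^c := by
        rw [← pow_succ]; congr 1; omega
      omega
    have h2 : k^c*a ≤ (k+a)^c * a :=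
      Nat.mul_le_mul_right a (Nat.pow_le_pow_left (Nat.le_add_right _ _) c)
    have h4 := Nat.mul_le_mul_left (c*a) h3
    calc (k+a)^(c+1) = (k+a)^c * (k+a) := by ring
      _ ≤ (k^c + c*a*(k+a)^(c-1)) * (k+a) := Nat.mul_le_mul_right _ ih
      _ = k^c*k + k^c*a + c*a*((k+a)^(c-1)*(k+a)) := by ring
      _ ≤ k^c*k + (k+a)^c*a + c*a*(k+a)^c := by omega
      _ = k^(c+1) + (c+1)*a*(k+a)^(c+1-1) := by simp only [Nat.add_sub_cancel]; ring

lemma pow_bound (a c : ℕ) : ∃ N, ∀ k, N ≤ k → (k+a)^c < 2*k^c := by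
  rcases Nat.eq_zero_or_pos c with rfl | hc
  · exact ⟨0, fun k _ => by simp⟩
  refine ⟨c*a*2^c + a + 1, fun k hk => ?_⟩
  have hka : a ≤ k := by omega
  have h1 : (k+a)^c ≤ k^c + c*a*(k+a)^(c-1) := pow_add_le a c k
  have h2 : (k+a)^(c-1) ≤ (2*k)^(c-1) := Nat.pow_le_pow_left (by omega) _
  have h3 : (2*k)^(c-1) = 2^(c-1) * k^(c-1) := by rw [Nat.mul_pow]
  have h4 : c*a*(k+a)^(c-1) ≤ c*a*2^c*k^(c-1) := by
    calc c*a*(k+a)^(c-1) ≤ c*a*(2^(c-1)*k^(c-1)) := by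
          exact Nat.mul_le_mul_left _ (h3 ▸ h2)
      _ ≤ c*a*2^c*k^(c-1) := by
          have : (2:ℕ)^(c-1) ≤ 2^c := Nat.pow_le_pow_right (by omega) (by omega)
          calc c*a*(2^(c-1)*k^(c-1)) = (c*a*2^(c-1))*k^(c-1) := by ring
            _ ≤ (c*a*2^c)*k^(c-1) := Nat.mul_le_mul_right _ (Nat.mul_le_mul_left _ this)
  have h5 : c*a*2^c*k^(c-1) < k*k^(c-1) := by
    apply Nat.mul_lt_mul_of_lt_of_le (by omega) (le_refl _)
    exact Nat.pow_pos (by omega)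
  have h6 : k*k^(c-1) = k^c := by
    rw [← pow_succ']
    congr 1
    omega
  have hkpos : 0 < k^c := Nat.pow_pos (by omega)
  omega

/-- binomial telescoping -/
lemma choose_tele (m c k : ℕ) :
    (k+c+m).choose m * ∏ j ∈ Finset.range c, (k+1+j) =
      (k+m).choose m * ∏ j ∈ Finset.range c, (k+m+1+j) := by
  induction c with
  | zero => simp
  | succ c ih =>
    have hrec : (k+c+m).choose m * (k+c+m+1) = (k+c+1+m).choose m * (k+c+1) := by
      have := Nat.choose_mul_succ_eq (k+c+m) m
      have h2 : k+c+m+1-m = k+c+1 := by omega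
      rw [h2] at this
      rw [show k+c+1+m = k+c+m+1 by omega]
      exact this
    rw [Finset.prod_range_succ, Finset.prod_range_succ]
    calc (k+(c+1)+m).choose m * ((∏ j ∈ Finset.range c, (k+1+j)) * (k+1+c))
        = ((k+c+1+m).choose m * (k+c+1)) * ∏ j ∈ Finset.range c, (k+1+j) := by
          rw [show k+(c+1)+m = k+c+1+m by omega]; ring
      _ = ((k+c+m).choose m * (k+c+m+1)) * ∏ j ∈ Finset.range c, (k+1+j) := by rw [hrec]
      _ = ((k+c+m).choose m * ∏ j ∈ Finset.range c, (k+1+j)) * (k+c+m+1) := by ring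
      _ = ((k+m).choose m * ∏ j ∈ Finset.range c, (k+m+1+j)) * (k+c+m+1) := by rw [ih]
      _ = (k+m).choose m * ((∏ j ∈ Finset.range c, (k+m+1+j)) * (k+m+1+c)) := by ring

lemma binom_bound (m c : ℕ) : ∃ N, ∀ k, N ≤ k → (k+c+m).choose m < 2 * (k+m).choose m := by
  obtain ⟨N, hN⟩ := pow_bound (m+c) c
  refine ⟨N+1, fun k hk => ?_⟩
  have hY : (∏ j ∈ Finset.range c, (k+m+1+j)) ≤ (k+1+(m+c))^c := by
    have h := Finset.prod_le_pow_card (Finset.range c) (fun j => k+m+1+j) (k+1+(m+c)) ?_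
    · simpa using h
    · intro j hj
      simp only [Finset.mem_range] at hj
      show k+m+1+j ≤ k+1+(m+c)
      omega
  have hX : (k+1)^c ≤ ∏ j ∈ Finset.range c, (k+1+j) := by
    calc (k+1)^c = ∏ _j ∈ Finset.range c, (k+1) := by rw [Finset.prod_const, Finset.card_range]
      _ ≤ _ := Finset.prod_le_prod (fun _ _ => by omega) (fun j _ => by omega)
  have hkey : (∏ j ∈ Finset.range c, (k+m+1+j)) < 2 * ∏ j ∈ Finset.range c, (k+1+j) := by
    calc (∏ j ∈ Finset.range c, (k+m+1+j)) ≤ (k+1+(m+c))^c := hY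
      _ < 2*(k+1)^c := hN (k+1) (by omega)
      _ ≤ 2 * ∏ j ∈ Finset.range c, (k+1+j) := Nat.mul_le_mul_left 2 hX
  have hpos : 0 < (k+m).choose m := Nat.choose_pos (by omega)
  have htele := choose_tele m c k
  have hXpos : 0 < ∏ j ∈ Finset.range c, (k+1+j) := by positivity
  by_contra hcon
  push_neg at hcon
  have : 2 * (k+m).choose m * ∏ j ∈ Finset.range c, (k+1+j) ≤
      (k+c+m).choose m * ∏ j ∈ Finset.range c, (k+1+j) := Nat.mul_le_mul_right _ hcon
  rw [htele] at this
  have h2 : (k+m).choose m * (2 * ∏ j ∈ Finset.range c, (k+1+j)) ≤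
      (k+m).choose m * ∏ j ∈ Finset.range c, (k+m+1+j) := by
    calc (k+m).choose m * (2 * ∏ j ∈ Finset.range c, (k+1+j))
        = 2 * (k+m).choose m * ∏ j ∈ Finset.range c, (k+1+j) := by ring
      _ ≤ (k+m).choose m * ∏ j ∈ Finset.range c, (k+m+1+j) := this
  have h3 := Nat.le_of_mul_le_mul_left h2 hpos
  omega

/-- extracting a finite set of monomial generators -/
lemma exists_finite_gen (I : Ideal (MvPolynomial (Fin n) K)) (G : Set (Fin n →₀ ℕ))
    (hG : I = Ideal.span ((fun c => monomial c (1 : K)) '' G)) :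
    ∃ G₀ : Set (Fin n →₀ ℕ), G₀.Finite ∧ G₀ ⊆ G ∧
      I = Ideal.span ((fun c => monomial c (1 : K)) '' G₀) := by
  classical
  obtain ⟨F, hF⟩ : I.FG := IsNoetherian.noetherian I
  have hmem : ∀ x ∈ F, ∃ T : Finset (MvPolynomial (Fin n) K),
      ↑T ⊆ ((fun c => monomial c (1 : K)) '' G) ∧ x ∈ Ideal.span (↑T : Set _) := by
    intro x hx
    have : x ∈ I := hF ▸ Ideal.subset_span hx
    rw [hG] at this
    exact Submodule.mem_span_finite_of_mem_span this
  choose T hT1 hT2 using hmem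
  set T' : Finset (MvPolynomial (Fin n) K) := F.attach.biUnion (fun x => T x.1 x.2) with hT'
  have hT'sub : ↑T' ⊆ ((fun c => monomial c (1 : K)) '' G) := by
    intro t ht
    rw [hT'] at ht
    simp only [Finset.coe_biUnion, Set.mem_iUnion] at ht
    obtain ⟨x, hx, hxt⟩ := ht
    exact hT1 x.1 x.2 hxt
  set G₀ : Set (Fin n →₀ ℕ) := {c ∈ G | monomial c (1:K) ∈ T'} with hG₀
  have himg : ((fun c => monomial c (1 : K)) '' G₀) = ↑T' := by
    ext q
    constructor
    · rintro ⟨c, ⟨hcG, hcT⟩, rfl⟩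
      exact hcT
    · intro hq
      obtain ⟨c, hcG, rfl⟩ := hT'sub hq
      exact ⟨c, ⟨hcG, hq⟩, rfl⟩
  have hG₀fin : G₀.Finite := by
    apply Set.Finite.of_finite_image (f := fun c => monomial c (1:K))
    · rw [himg]; exact T'.finite_toSet
    · intro a _ b _ hab
      exact MvPolynomial.monomial_left_injective one_ne_zero hab
  refine ⟨G₀, hG₀fin, fun c hc => hc.1, le_antisymm ?_ ?_⟩
  · rw [← hF]
    rw [Ideal.span_le]
    intro x hx
    have : x ∈ Ideal.span (↑(T x hx) : Set _) := hT2 x hx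
    refine Ideal.span_mono ?_ this
    rw [himg]
    intro t ht
    rw [hT']
    simp only [Finset.coe_biUnion, Set.mem_iUnion]
    exact ⟨⟨x, hx⟩, F.mem_attach _, ht⟩
  · rw [hG]
    exact Ideal.span_mono (Set.image_mono (fun c hc => hc.1))


/-- The combinatorial core for the lower bound: the exponent set of `m^k·I` can be
partitioned into finitely many translated coordinate orthants with nonempty direction set. -/
lemma exists_partition (hn : 0 < n) (E : Set (Fin n →₀ ℕ)) (Γ : Set (Fin n →₀ ℕ))
    (k B : ℕ) (hk : 1 ≤ k)
    (hmem : ∀ e, e ∈ E ↔ ∃ γ ∈ Γ, γ ≤ e ∧ dg γ + k ≤ dg e)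
    (hΓB : ∀ γ ∈ Γ, dg γ ≤ B) :
    ∃ (ι : Type) (_inst : Fintype ι) (c : ι → (Fin n →₀ ℕ)) (Z : ι → Finset (Fin n)),
      (∀ i, (Z i).Nonempty) ∧ (∀ i, c i ∈ E) ∧
      (∀ e ∈ E, ∃ i s, ↑s.support ⊆ (↑(Z i) : Set (Fin n)) ∧ e = c i + s) ∧
      (∀ i j s s', ↑s.support ⊆ (↑(Z i) : Set (Fin n)) → ↑s'.support ⊆ (↑(Z j) : Set (Fin n)) →
        c i + s = c j + s' → i = j) := by
  classical
  set d := k + B with hd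
  set z : Fin n := ⟨0, hn⟩ with hz
  set D : Fin n →₀ ℕ := Finsupp.equivFunOnFinite.symm (fun _ => d) with hD
  have hDapp : ∀ i, D i = d := fun i => rfl
  have hup : ∀ e ∈ E, ∀ e', e ≤ e' → e' ∈ E := by
    intro e he e' hee'
    obtain ⟨γ, hγ, hγe, hγd⟩ := (hmem e).mp he
    exact (hmem e').mpr ⟨γ, hγ, le_trans hγe hee', le_trans hγd (by
      have := dg_mono hee'; omega)⟩
  -- type A indices
  set UA : Set (Fin n →₀ ℕ) := {u | u ∈ E ∧ u ≤ D ∧ ∃ i, i ≠ z ∧ u i = d} with hUA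
  -- type B indices
  set UB : Set (Fin n →₀ ℕ) := {w | w ∈ E ∧ (∀ i, i ≠ z → w i < d) ∧
    (w z = 0 ∨ Finsupp.single z (w z - 1) + Finsupp.erase z w ∉ E)} with hUB
  -- finiteness
  have hUAfin : UA.Finite := by
    apply (finite_box d).subset
    intro u hu i
    have := Finsupp.le_def.mp hu.2.1 i
    rw [hDapp] at this
    exact this
  have hUBfin : UB.Finite := by
    apply (finite_box d).subset
    rintro w ⟨hwE, hwlt, hwmin⟩ i
    rcases eq_or_ne i z with rfl | hiz
    · -- bound on the z-coordinate via minimality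
      by_contra hgt
      push_neg at hgt
      obtain ⟨γ, hγΓ, hγw, hγd⟩ := (hmem w).mp hwE
      -- the point with z-coordinate dg γ + k is in E
      set v : Fin n →₀ ℕ := Finsupp.single z (dg γ + k) + Finsupp.erase z w with hv
      have hvE : v ∈ E := by
        refine (hmem v).mpr ⟨γ, hγΓ, ?_, ?_⟩
        · rw [Finsupp.le_def]
          intro j
          rcases eq_or_ne j z with rfl | hjz
          · rw [hv]
            simp only [Finsupp.add_apply, Finsupp.single_eq_same, Finsupp.erase_same]
            have := apply_le_dg γ z
            omega
          · rw [hv]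
            simp only [Finsupp.add_apply, Finsupp.single_apply, if_neg (Ne.symm hjz),
              Finsupp.erase_ne hjz, zero_add]
            exact Finsupp.le_def.mp hγw j
        · rw [hv, dg_add, dg_single]
          omega
      -- and v ≤ (w lowered by one at z)
      have hwz : w z ≠ 0 := by
        have hb : dg γ + k ≤ d := by have := hΓB γ hγΓ; omega
        omega
      rcases hwmin with h0 | hnot
      · exact hwz h0
      · apply hnot
        refine hup v hvE _ ?_
        rw [Finsupp.le_def]
        intro j
        rcases eq_or_ne j z with rfl | hjz
        · rw [hv]
          simp only [Finsupp.add_apply, Finsupp.single_eq_same, Finsupp.erase_same]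
          have hb : dg γ + k ≤ d := by have := hΓB γ hγΓ; omega
          omega
        · rw [hv]
          simp only [Finsupp.add_apply, Finsupp.single_apply, if_neg (Ne.symm hjz),
            Finsupp.erase_ne hjz, zero_add]
          exact le_refl _
    · exact le_of_lt (hwlt i hiz)
  have hUAfin' : Finite ↥UA := hUAfin
  have hUBfin' : Finite ↥UB := hUBfin
  have : Fintype ↥UA := Fintype.ofFinite _
  have : Fintype ↥UB := Fintype.ofFinite _
  refine ⟨↥UA ⊕ ↥UB, inferInstance,
    (fun i => match i with
      | Sum.inl u => u.1
      | Sum.inr w => w.1),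
    (fun i => match i with
      | Sum.inl u => Finset.univ.filter (fun j => u.1 j = d)
      | Sum.inr _ => {z}), ?_, ?_, ?_, ?_⟩
  · rintro (u | w)
    · obtain ⟨i, hiz, hid⟩ := u.2.2.2
      exact ⟨i, Finset.mem_filter.mpr ⟨Finset.mem_univ _, hid⟩⟩
    · exact ⟨z, Finset.mem_singleton_self z⟩
  · rintro (u | w)
    · exact u.2.1
    · exact w.2.1
  · -- covering
    intro e he
    by_cases hA : ∃ i, i ≠ z ∧ d ≤ e i
    · obtain ⟨i₀, hi₀z, hi₀d⟩ := hA
      set u : Fin n →₀ ℕ := e ⊓ D with hu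
      have huapp : ∀ i, u i = min (e i) d := by
        intro i
        rw [hu, Finsupp.inf_apply, hDapp]
      have hui₀ : u i₀ = d := by rw [huapp]; omega
      have huE : u ∈ E := by
        obtain ⟨γ, hγΓ, hγe, hγd⟩ := (hmem e).mp he
        refine (hmem u).mpr ⟨γ, hγΓ, ?_, ?_⟩
        · rw [Finsupp.le_def]
          intro j
          rw [huapp]
          have h1 := Finsupp.le_def.mp hγe j
          have h2 := apply_le_dg γ j
          have h3 := hΓB γ hγΓ
          omega
        · have h4 := apply_le_dg u i₀
          have h3 := hΓB γ hγΓ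
          omega
      have huUA : u ∈ UA := ⟨huE, by
        rw [Finsupp.le_def]; intro j; rw [huapp, hDapp]; omega, i₀, hi₀z, hui₀⟩
      refine ⟨Sum.inl ⟨u, huUA⟩, e - u, ?_, ?_⟩
      · intro j hj
        simp only [Finset.coe_filter, Set.mem_setOf_eq, Finset.mem_coe, Finset.mem_univ, true_and]
        simp only [Finset.mem_coe, Finsupp.mem_support_iff, Finsupp.tsub_apply] at hj
        have := huapp j
        show u j = d
        omega
      · have hule : u ≤ e := by rw [Finsupp.le_def]; intro j; rw [huapp]; omega
        rw [add_tsub_cancel_of_le hule]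
    · push_neg at hA
      set A : Set ℕ := {a | Finsupp.single z a + Finsupp.erase z e ∈ E} with hAdef
      have heA : e z ∈ A := by
        show Finsupp.single z (e z) + Finsupp.erase z e ∈ E
        rw [Finsupp.single_add_erase]
        exact he
      set a₀ := sInf A with ha₀
      set w : Fin n →₀ ℕ := Finsupp.single z a₀ + Finsupp.erase z e with hw
      have hwE : w ∈ E := Nat.sInf_mem ⟨e z, heA⟩
      have hwz : w z = a₀ := by
        rw [hw]
        simp [Finsupp.add_apply, Finsupp.single_eq_same, Finsupp.erase_same]
      have hwj : ∀ j, j ≠ z → w j = e j := by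
        intro j hjz
        rw [hw]
        simp [Finsupp.add_apply, Finsupp.single_apply, if_neg (Ne.symm hjz),
          Finsupp.erase_ne hjz]
      have herase : Finsupp.erase z w = Finsupp.erase z e := by
        ext j
        rcases eq_or_ne j z with rfl | hjz
        · simp [Finsupp.erase_same]
        · rw [Finsupp.erase_ne hjz, Finsupp.erase_ne hjz, hwj j hjz]
      have hwUB : w ∈ UB := by
        refine ⟨hwE, fun j hjz => ?_, ?_⟩
        · rw [hwj j hjz]; exact hA j hjz
        · rcases Nat.eq_zero_or_pos a₀ with h0 | hpos
          · left; rw [hwz, h0]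
          · right
            intro hcon
            rw [hwz, herase] at hcon
            have : a₀ - 1 ∈ A := hcon
            have := Nat.sInf_le this
            omega
      have ha₀e : a₀ ≤ e z := Nat.sInf_le heA
      refine ⟨Sum.inr ⟨w, hwUB⟩, Finsupp.single z (e z - a₀), ?_, ?_⟩
      · intro j hj
        simp only [Finset.mem_coe, Finsupp.mem_support_iff] at hj
        simp only [Finset.coe_singleton, Set.mem_singleton_iff]
        by_contra hjz
        rw [Finsupp.single_apply, if_neg (Ne.symm hjz)] at hj
        exact hj rfl
      · ext j
        rcases eq_or_ne j z with rfl | hjz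
        · simp only [Finsupp.add_apply, Finsupp.single_eq_same, hwz]
          omega
        · simp only [Finsupp.add_apply, Finsupp.single_apply, if_neg (Ne.symm hjz),
            hwj j hjz, add_zero]
  · -- disjointness
    have memP_A : ∀ (u : ↥UA) (s : Fin n →₀ ℕ) (e : Fin n →₀ ℕ),
        ↑s.support ⊆ (↑(Finset.univ.filter (fun j => u.1 j = d)) : Set (Fin n)) →
        e = u.1 + s → u.1 = e ⊓ D := by
      rintro u s e hs rfl
      ext j
      rw [Finsupp.inf_apply, hDapp]
      have hud := Finsupp.le_def.mp u.2.2.1 j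
      rw [hDapp] at hud
      by_cases hj : u.1 j = d
      · have : d ≤ u.1 j + s j := by omega
        show u.1 j = min ((u.1 + s) j) d
        rw [Finsupp.add_apply]
        omega
      · have hsj : s j = 0 := by
          by_contra hsj
          have : j ∈ s.support := Finsupp.mem_support_iff.mpr hsj
          have := hs this
          simp only [Finset.coe_filter, Set.mem_setOf_eq, Finset.mem_univ, true_and] at this
          exact hj this
        show u.1 j = min ((u.1 + s) j) d
        rw [Finsupp.add_apply, hsj]
        omega
    rintro (u | w) (u' | w') s s' hs hs' heq
    · -- A vs A
      have heq' : (u.1 : Fin n →₀ ℕ) + s = u'.1 + s' := heq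
      have h1 := memP_A u s (u.1 + s) hs rfl
      have h2 := memP_A u' s' (u.1 + s) hs' heq' 
      congr 1
      exact Subtype.ext (h1.trans h2.symm)
    · -- A vs B : contradiction
      exfalso
      obtain ⟨i₀, hi₀z, hi₀d⟩ := u.2.2.2
      have h1 : d ≤ (u.1 + s) i₀ := by
        rw [Finsupp.add_apply, hi₀d]; omega
      have hsz : ∀ j, j ≠ z → s' j = 0 := by
        intro j hjz
        by_contra hsj
        have : j ∈ s'.support := Finsupp.mem_support_iff.mpr hsj
        have := hs' this
        simp only [Finset.coe_singleton, Set.mem_singleton_iff] at this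
        exact hjz this
      have h2 : (w'.1 + s') i₀ < d := by
        rw [Finsupp.add_apply, hsz i₀ hi₀z, add_zero]
        exact w'.2.2.1 i₀ hi₀z
      have heq' : (u.1 : Fin n →₀ ℕ) + s = w'.1 + s' := heq
      rw [heq'] at h1
      omega
    · -- B vs A : contradiction
      exfalso
      obtain ⟨i₀, hi₀z, hi₀d⟩ := u'.2.2.2
      have h1 : d ≤ (u'.1 + s') i₀ := by
        rw [Finsupp.add_apply, hi₀d]; omega
      have hsz : ∀ j, j ≠ z → s j = 0 := by
        intro j hjz
        by_contra hsj
        have : j ∈ s.support := Finsupp.mem_support_iff.mpr hsj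
        have := hs this
        simp only [Finset.coe_singleton, Set.mem_singleton_iff] at this
        exact hjz this
      have h2 : (w.1 + s) i₀ < d := by
        rw [Finsupp.add_apply, hsz i₀ hi₀z, add_zero]
        exact w.2.2.1 i₀ hi₀z
      have heq' : (w.1 : Fin n →₀ ℕ) + s = u'.1 + s' := heq
      rw [← heq'] at h1
      omega
    · -- B vs B
      have hsz : ∀ (t : Fin n →₀ ℕ), ↑t.support ⊆ ({z} : Set (Fin n)) →
          ∀ j, j ≠ z → t j = 0 := by
        intro t ht j hjz
        by_contra hsj
        have : j ∈ t.support := Finsupp.mem_support_iff.mpr hsj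
        have := ht this
        simp only [Set.mem_singleton_iff] at this
        exact hjz this
      have hsz1 := hsz s (by simpa using hs)
      have hsz2 := hsz s' (by simpa using hs')
      have heq' : (w.1 : Fin n →₀ ℕ) + s = w'.1 + s' := heq
      have hweq : ∀ j, j ≠ z → w.1 j = w'.1 j := by
        intro j hjz
        have happ : (w.1 + s) j = (w'.1 + s') j := by rw [heq']
        rw [Finsupp.add_apply, Finsupp.add_apply, hsz1 j hjz, hsz2 j hjz] at happ
        omega
      have hwzeq : w.1 z = w'.1 z := by
        by_contra hne
        -- wlog via symmetry : show impossible
        have key : ∀ (a b : ↥UB), (∀ j, j ≠ z → a.1 j = b.1 j) → a.1 z < b.1 z → False := by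
          intro a b hab hlt
          rcases b.2.2.2 with h0 | hnotE
          · omega
          · apply hnotE
            refine hup a.1 a.2.1 _ ?_
            rw [Finsupp.le_def]
            intro j
            rcases eq_or_ne j z with rfl | hjz
            · simp only [Finsupp.add_apply, Finsupp.single_eq_same, Finsupp.erase_same]
              omega
            · simp only [Finsupp.add_apply, Finsupp.single_apply, if_neg (Ne.symm hjz),
                Finsupp.erase_ne hjz, zero_add, hab j hjz]
              exact le_refl _
        rcases Nat.lt_or_ge (w.1 z) (w'.1 z) with hlt | hge
        · exact key w w' hweq hlt
        · exact key w' w (fun j hj => (hweq j hj).symm) (by omega)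
      congr 1
      apply Subtype.ext
      ext j
      rcases eq_or_ne j z with rfl | hjz
      · exact hwzeq
      · exact hweq j hjz



lemma subtype_map_inj {α : Type*} {P Q : α → Prop} (h : ∀ a, P a → Q a) :
    Function.Injective (fun x : {a // P a} => (⟨x.1, h x.1 x.2⟩ : {a // Q a})) := by
  intro x y hxy
  apply Subtype.ext
  have := congrArg Subtype.val hxy
  simpa using this

/-- Part I: from a partition with nonempty direction sets, build a Stanley decomposition. -/
lemma exists_good_decomposition {J : Ideal (MvPolynomial (Fin n) K)}
    (hJmono : ∀ p ∈ J, ∀ e ∈ p.support, monomial e (1:K) ∈ J)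
    (g : MultiGrading K n ↥J)
    (hg : ∀ (c : Fin n →₀ ℕ) (hc : monomial c (1 : K) ∈ J),
      (⟨monomial c 1, hc⟩ : ↥J) ∈ g.deg (fun i => (c i : ℤ)))
    (ι : Type) [Fintype ι] (c : ι → Fin n →₀ ℕ) (Z : ι → Finset (Fin n))
    (hZ : ∀ i, (Z i).Nonempty)
    (hcE : ∀ i, monomial (c i) (1:K) ∈ J)
    (hcov : ∀ e, monomial e (1:K) ∈ J →
      ∃ i s, ↑s.support ⊆ (↑(Z i) : Set (Fin n)) ∧ e = c i + s)
    (hdisj : ∀ i j s s', ↑s.support ⊆ (↑(Z i) : Set (Fin n)) → ↑s'.support ⊆ (↑(Z j) : Set (Fin n)) →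
        c i + s = c j + s' → i = j) :
    ∃ D : StanleyDecomposition g, ∀ i, (D.Z i).Nonempty := by
  classical
  set q : Fin (Fintype.card ι) ≃ ι := (Fintype.equivFin ι).symm with hq
  have hmJ : ∀ i, monomial (c (q i)) (1:K) ∈ J := fun i => hcE (q i)
  set elt : Fin (Fintype.card ι) → ↥J := fun i => ⟨monomial (c (q i)) 1, hmJ i⟩ with helt
  have hcoe : ∀ i, ((elt i : ↥J) : MvPolynomial (Fin n) K) = (1:K) • monomial (c (q i)) 1 := by
    intro i; rw [one_smul]
  set P : ι → Set (Fin n →₀ ℕ) :=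
    fun j => {e | ∃ s : Fin n →₀ ℕ, ↑s.support ⊆ (↑(Z j) : Set (Fin n)) ∧ e = c j + s} with hP
  have hPsub : ∀ i, stanleySpace (K := K) (elt i) (Z (q i)) ≤ suppSub J (P (q i)) := by
    intro i
    exact stanleySpace_le_suppSub (hcoe i) (Z (q i))
  refine ⟨⟨Fintype.card ι, elt, fun i => Z (q i), ?_, ?_, ?_⟩, ?_⟩
  · intro i
    exact ⟨fun j => ((c (q i)) j : ℤ), hg _ _⟩
  · intro i p hp hp0
    have hcoe0 : p * monomial (c (q i)) 1 = 0 := by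
      have := congrArg (fun (x : ↥J) => (x : MvPolynomial (Fin n) K)) hp0
      exact (coe_poly_smul p (elt i)).symm.trans this
    rcases mul_eq_zero.mp hcoe0 with h | h
    · exact h
    · exact absurd (monomial_eq_zero.mp h) one_ne_zero
  · apply DirectSum.isInternal_submodule_of_iSupIndep_of_iSup_eq_top
    · intro i
      rw [Submodule.disjoint_def]
      intro x hxi hxrest
      have h1 : x ∈ suppSub J (P (q i)) := hPsub i hxi
      have h2 : x ∈ suppSub J (⋃ (j : ι) (_ : j ≠ q i), P j) := by
        have hle : (⨆ (j : Fin (Fintype.card ι)) (_ : j ≠ i), stanleySpace (K := K) (elt j) (Z (q j)))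
            ≤ suppSub J (⋃ (j : ι) (_ : j ≠ q i), P j) := by
          refine iSup_le fun (j : Fin (Fintype.card ι)) => iSup_le fun hj => ?_
          refine le_trans (hPsub j) (suppSub_mono ?_)
          have hqj : q j ≠ q i := fun h => hj (q.injective h)
          exact fun e he => Set.mem_iUnion.mpr ⟨q j, Set.mem_iUnion.mpr ⟨hqj, he⟩⟩
        exact hle hxrest
      have hsupp : ((x : ↥J) : MvPolynomial (Fin n) K).support = ∅ := by
        rw [Finset.eq_empty_iff_forall_notMem]
        intro e he
        have he1 := h1 e he
        have he2 := h2 e he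
        obtain ⟨j, hj⟩ := Set.mem_iUnion.mp he2
        obtain ⟨hjne, hePj⟩ := Set.mem_iUnion.mp hj
        obtain ⟨s, hs, hes⟩ := he1
        obtain ⟨s', hs', hes'⟩ := hePj
        exact hjne (hdisj j (q i) s' s hs' hs (hes'.symm.trans hes))
      exact Subtype.ext (support_eq_empty.mp hsupp)
    · rw [eq_top_iff]
      intro m _
      refine mem_iSup_of_mono hJmono _ ?_ m
      intro e he
      obtain ⟨i, s, hs, hes⟩ := hcov e he
      obtain ⟨j, hqj⟩ : ∃ j, q j = i := ⟨q.symm i, q.apply_symm_apply i⟩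
      rw [← hqj] at hs hes
      subst hes
      exact ⟨j, monomial_mem_stanleySpace (hcoe j) one_ne_zero hs he⟩
  · intro i
    exact hZ (q i)

/-- Part II: any Stanley decomposition has a face of dimension at most 1, for k large. -/
lemma decomposition_not_deep {J : Ideal (MvPolynomial (Fin n) K)} (hn : 0 < n)
    (hJmono : ∀ p ∈ J, ∀ e ∈ p.support, monomial e (1:K) ∈ J)
    (g : MultiGrading K n ↥J)
    (hg : ∀ (c : Fin n →₀ ℕ) (hc : monomial c (1 : K) ∈ J),
      (⟨monomial c 1, hc⟩ : ↥J) ∈ g.deg (fun i => (c i : ℤ)))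
    (Γ : Set (Fin n →₀ ℕ)) (k δ : ℕ)
    (hmem : ∀ e, monomial e (1:K) ∈ J ↔ ∃ γ ∈ Γ, γ ≤ e ∧ dg γ + k ≤ dg e)
    (hγstar : ∃ γ ∈ Γ, dg γ = δ) (hδ : ∀ γ ∈ Γ, δ ≤ dg γ)
    (hnum : ((k + δ + 1) + (n-1)).choose (n-1) < 2 * ((k + (n-1)).choose (n-1)))
    (D : StanleyDecomposition g) : ∃ i, (D.Z i).card ≤ 1 := by
  classical
  by_contra hcon
  push_neg at hcon
  -- each elt is essentially a monomial
  have helt : ∀ i, ∃ (c : Fin n →₀ ℕ) (hc : monomial c (1:K) ∈ J) (t : K), t ≠ 0 ∧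
      D.elt i = t • (⟨monomial c 1, hc⟩ : ↥J) := by
    intro i
    have hne : D.elt i ≠ 0 := by
      intro h0
      have := D.free i 1 (Subalgebra.one_mem _) (by rw [one_smul, h0])
      exact one_ne_zero this
    obtain ⟨a, ha⟩ := D.homogeneous i
    rcases grading_rigid hJmono g hg a _ ha with h0 | ⟨c, hc, t, ht, _, heq⟩
    · exact absurd h0 hne
    · exact ⟨c, hc, t, ht, heq⟩
  choose cc hcc tt htt heqq using helt
  have hcoe : ∀ i, ((D.elt i : ↥J) : MvPolynomial (Fin n) K) = tt i • monomial (cc i) 1 := by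
    intro i
    rw [heqq i]
    rfl
  set P : Fin D.r → Set (Fin n →₀ ℕ) :=
    fun i => {e | ∃ s : Fin n →₀ ℕ, ↑s.support ⊆ (↑(D.Z i) : Set (Fin n)) ∧ e = cc i + s} with hP
  have hPsub : ∀ i, stanleySpace (K := K) (D.elt i) (D.Z i) ≤ suppSub J (P i) := by
    intro i
    exact stanleySpace_le_suppSub (hcoe i) (D.Z i)
  have hPJ : ∀ i e, e ∈ P i → monomial e (1:K) ∈ J := by
    rintro i e ⟨s, hs, rfl⟩
    have : monomial (cc i + s) (1:K) = monomial s 1 * monomial (cc i) 1 := by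
      rw [monomial_mul, one_mul, add_comm]
    rw [this]
    exact Ideal.mul_mem_left _ _ (hcc i)
  have hPmem : ∀ i e (he : e ∈ P i) (heJ : monomial e (1:K) ∈ J),
      (⟨monomial e 1, heJ⟩ : ↥J) ∈ stanleySpace (K := K) (D.elt i) (D.Z i) := by
    rintro i e ⟨s, hs, rfl⟩ heJ
    exact monomial_mem_stanleySpace (hcoe i) (htt i) hs heJ
  have hdisjP : ∀ i j, i ≠ j → ∀ e, e ∈ P i → e ∈ P j → False := by
    intro i j hij e hei hej
    have heJ := hPJ i e hei
    have hd := (D.isInternal.submodule_iSupIndep).pairwiseDisjoint hij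
    have h0 := Submodule.disjoint_def.mp hd _ (hPmem i e hei heJ) (hPmem j e hej heJ)
    rw [Subtype.ext_iff] at h0
    exact one_ne_zero (monomial_eq_zero.mp h0)
  have hcovP : ∀ e, monomial e (1:K) ∈ J → ∃ i, e ∈ P i := by
    intro e heJ
    have hm : (⟨monomial e 1, heJ⟩ : ↥J) ∈ ⨆ i, stanleySpace (K := K) (D.elt i) (D.Z i) := by
      rw [D.isInternal.submodule_iSup_eq_top]
      trivial
    have hsub : (⨆ i, stanleySpace (K := K) (D.elt i) (D.Z i)) ≤ suppSub J (⋃ i, P i) :=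
      iSup_le fun i => le_trans (hPsub i) (suppSub_mono (Set.subset_iUnion P i))
    have := hsub hm e (by
      rw [support_monomial, if_neg one_ne_zero]
      exact Finset.mem_singleton_self e)
    exact Set.mem_iUnion.mp this
  -- degree bound
  have hEd : ∀ e, monomial e (1:K) ∈ J → k + δ ≤ dg e := by
    intro e he
    obtain ⟨γ, hγ, _, hd⟩ := (hmem e).mp he
    have := hδ γ hγ
    omega
  -- layers
  set L1 : Set (Fin n →₀ ℕ) := {e | monomial e (1:K) ∈ J ∧ dg e = k + δ} with hL1
  set L2 : Set (Fin n →₀ ℕ) := {e | monomial e (1:K) ∈ J ∧ dg e = k + δ + 1} with hL2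
  have : Finite {e : Fin n →₀ ℕ // dg e = k + δ} := finite_dg_eq _
  have : Finite {e : Fin n →₀ ℕ // dg e = k + δ + 1} := finite_dg_eq _
  have : Finite {e : Fin n →₀ ℕ // dg e = k} := finite_dg_eq _
  have hL1fin : Finite ↥L1 :=
    Finite.of_injective _ (subtype_map_inj (fun e (he : e ∈ L1) => he.2))
  have hL2fin : Finite ↥L2 :=
    Finite.of_injective _ (subtype_map_inj (fun e (he : e ∈ L2) => he.2))
  -- bases
  have hbase : ∀ e, e ∈ L1 → ∀ i, e ∈ P i → e = cc i := by
    rintro e ⟨heJ, hed⟩ i ⟨s, hs, rfl⟩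
    have h1 := hEd (cc i) (hcc i)
    rw [dg_add] at hed
    have : dg s = 0 := by omega
    rw [dg_eq_zero this, add_zero]
  -- two directions in each face
  have htwo : ∀ i, ∃ a ∈ D.Z i, ∃ b ∈ D.Z i, a ≠ b := fun i => Finset.one_lt_card.mp (hcon i)
  choose j1 hj1 j2 hj2 hj12 using htwo
  -- the doubling injection
  choose ix hix using hcovP
  set jj : Fin D.r → Bool → Fin n := fun i b => if b then j1 i else j2 i with hjjdef
  have hjjZ : ∀ i b, jj i b ∈ D.Z i := by
    intro i b
    cases b
    · simpa [hjjdef] using hj2 i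
    · simpa [hjjdef] using hj1 i
  have hjjinj : ∀ i b b', jj i b = jj i b' → b = b' := by
    intro i b b' h
    cases b <;> cases b'
    · rfl
    · exfalso
      simp only [hjjdef, Bool.false_eq_true, if_false, if_true] at h
      exact (hj12 i) h.symm
    · exfalso
      simp only [hjjdef, Bool.false_eq_true, if_false, if_true] at h
      exact (hj12 i) h
    · rfl
  have hyP : ∀ (x : ↥L1) (b : Bool),
      (x.1 + Finsupp.single (jj (ix x.1 x.2.1) b) 1) ∈ P (ix x.1 x.2.1) := by
    intro x b
    refine ⟨Finsupp.single (jj (ix x.1 x.2.1) b) 1, ?_,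
      congrArg (fun t => t + Finsupp.single (jj (ix x.1 x.2.1) b) 1)
        (hbase x.1 x.2 _ (hix x.1 x.2.1))⟩
    intro l hl
    have h1 : l ∈ ({jj (ix x.1 x.2.1) b} : Finset (Fin n)) :=
      Finsupp.support_single_subset (Finset.mem_coe.mp hl)
    rw [Finset.mem_singleton] at h1
    rw [h1]
    exact Finset.mem_coe.mpr (hjjZ _ b)
  have hφdata : ∀ (x : ↥L1) (b : Bool),
      (x.1 + Finsupp.single (jj (ix x.1 x.2.1) b) 1) ∈ L2 :=
    fun x b => ⟨hPJ _ _ (hyP x b), by rw [dg_add, dg_single, x.2.2]⟩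
  set φ : ↥L1 × Bool → ↥L2 := fun p => ⟨_, hφdata p.1 p.2⟩ with hφ
  have hφinj : Function.Injective φ := by
    rintro ⟨x, b⟩ ⟨x', b'⟩ hxy
    have hy : x.1 + Finsupp.single (jj (ix x.1 x.2.1) b) 1
        = x'.1 + Finsupp.single (jj (ix x'.1 x'.2.1) b') 1 :=
      congrArg Subtype.val hxy
    have hii' : ix x.1 x.2.1 = ix x'.1 x'.2.1 := by
      by_contra hne
      have h2 := hyP x' b'
      rw [← hy] at h2
      exact hdisjP _ _ hne _ (hyP x b) h2
    have hxx' : x.1 = x'.1 := by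
      rw [hbase x.1 x.2 _ (hix x.1 x.2.1), hbase x'.1 x'.2 _ (hix x'.1 x'.2.1), hii']
    have hjj' : Finsupp.single (jj (ix x.1 x.2.1) b) (1:ℕ)
        = Finsupp.single (jj (ix x'.1 x'.2.1) b') 1 := by
      apply add_left_cancel (a := x.1)
      conv_rhs => rw [hxx']
      exact hy
    have hj5 := Finsupp.single_left_injective (M := ℕ) one_ne_zero hjj'
    rw [← hii'] at hj5
    have hbb' : b = b' := hjjinj _ b b' hj5
    exact Prod.ext (Subtype.ext hxx') hbb' 
  -- lower bound for L1
  obtain ⟨γs, hγsΓ, hγsdg⟩ := hγstar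
  have hψ : ∀ (f : {e : Fin n →₀ ℕ // dg e = k}), (γs + f.1) ∈ L1 := by
    intro f
    constructor
    · refine (hmem _).mpr ⟨γs, hγsΓ, ?_, ?_⟩
      · rw [Finsupp.le_def]
        intro i
        rw [Finsupp.add_apply]
        omega
      · rw [dg_add, hγsdg, f.2]
    · rw [dg_add, hγsdg, f.2]
      omega
  have hψinj : Function.Injective (fun (f : {e : Fin n →₀ ℕ // dg e = k}) => (⟨γs + f.1, hψ f⟩ : ↥L1)) := by
    intro f f' hff
    have := congrArg Subtype.val hff
    simp only at this
    exact Subtype.ext (add_left_cancel this)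
  -- counting
  have c1 : Nat.card {e : Fin n →₀ ℕ // dg e = k} ≤ Nat.card ↥L1 :=
    Nat.card_le_card_of_injective _ hψinj
  have c2 : Nat.card (↥L1 × Bool) ≤ Nat.card ↥L2 :=
    Nat.card_le_card_of_injective φ hφinj
  have c3 : Nat.card ↥L2 ≤ Nat.card {e : Fin n →₀ ℕ // dg e = k + δ + 1} :=
    Nat.card_le_card_of_injective _ (subtype_map_inj (fun e (he : e ∈ L2) => he.2))
  have c4 : Nat.card (↥L1 × Bool) = 2 * Nat.card ↥L1 := by
    rw [Nat.card_prod, Nat.card_eq_fintype_card (α := Bool), Fintype.card_bool, mul_comm]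
  rw [card_dg_eq hn] at c1 c3
  have : 2 * (k + (n-1)).choose (n-1) ≤ (k + δ + 1 + (n-1)).choose (n-1) := by
    calc 2 * (k + (n-1)).choose (n-1) ≤ 2 * Nat.card ↥L1 := by omega
      _ = Nat.card (↥L1 × Bool) := c4.symm
      _ ≤ Nat.card ↥L2 := c2
      _ ≤ _ := c3
  omega


lemma maxIdeal_pow_mul_span (hn : 0 < n) (k : ℕ) (G₀ : Set (Fin n →₀ ℕ)) :
    maxIdeal K n ^ k * Ideal.span ((fun c => monomial c (1 : K)) '' G₀)
      = Ideal.span ((fun c => monomial c (1 : K)) '' ({c | dg c = k} + G₀)) := by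
  rw [maxIdeal_pow hn k, span_monomials_mul]

lemma maxIdeal_pow_mul_mem_iff (hn : 0 < n) (k : ℕ) (G₀ : Set (Fin n →₀ ℕ)) (e : Fin n →₀ ℕ) :
    monomial e (1:K) ∈ maxIdeal K n ^ k * Ideal.span ((fun c => monomial c (1 : K)) '' G₀) ↔
      ∃ γ ∈ G₀, γ ≤ e ∧ dg γ + k ≤ dg e := by
  rw [maxIdeal_pow_mul_span hn k G₀, monomial_mem_span_iff]
  constructor
  · rintro ⟨a, ha, hae⟩
    obtain ⟨c, hc, γ, hγ, rfl⟩ := Set.mem_add.mp ha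
    refine ⟨γ, hγ, le_trans le_add_self hae, ?_⟩
    have h1 := dg_mono hae
    rw [dg_add] at h1
    have hck : dg c = k := hc
    omega
  · rintro ⟨γ, hγ, hγe, hdg⟩
    have h0 : dg e = dg (e - γ) + dg γ := by
      conv_lhs => rw [← tsub_add_cancel_of_le hγe]
      rw [dg_add]
    have h1 : k ≤ dg (e - γ) := by omega
    obtain ⟨c, hcle, hck⟩ := exists_le_of_dg_ge h1
    refine ⟨c + γ, Set.mem_add.mpr ⟨c, hck, γ, hγ, rfl⟩, ?_⟩
    calc c + γ ≤ (e - γ) + γ := add_le_add_left hcle γ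
      _ = e := tsub_add_cancel_of_le hγe

lemma maxIdeal_pow_mul_monoSupp (hn : 0 < n) (k : ℕ) (G₀ : Set (Fin n →₀ ℕ)) :
    ∀ p ∈ maxIdeal K n ^ k * Ideal.span ((fun c => monomial c (1 : K)) '' G₀),
      ∀ e ∈ p.support,
        monomial e (1:K) ∈ maxIdeal K n ^ k * Ideal.span ((fun c => monomial c (1 : K)) '' G₀) := by
  intro p hp e he
  rw [maxIdeal_pow_mul_span hn k G₀] at hp ⊢
  rw [monomial_mem_span_iff]
  exact (mem_span_monomials_iff _ p).mp hp e he

end SD15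


/-- Let `I ⊆ S = K[x₁,…,xₙ]` be a (nonzero) monomial ideal and
`𝔪 = (x₁,…,xₙ)`.  Then `sdepth (𝔪^k I) = 1` for all sufficiently large `k`
(where `𝔪^k I` carries its natural multigrading, in which every monomial of
`𝔪^k I` is homogeneous of its own multidegree). -/
theorem sdepth_maxIdeal_pow_mul_eq_one {K : Type*} [Field K] {n : ℕ} (hn : 0 < n)
    (I : Ideal (MvPolynomial (Fin n) K))
    (hmono : ∃ G : Set (Fin n →₀ ℕ), I = Ideal.span ((fun c => monomial c (1 : K)) '' G))
    (hI : I ≠ ⊥) :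
    ∃ N : ℕ, ∀ k : ℕ, N ≤ k →
      ∀ g : MultiGrading K n ↥(maxIdeal K n ^ k * I),
        (∀ (c : Fin n →₀ ℕ) (hc : monomial c (1 : K) ∈ maxIdeal K n ^ k * I),
          (⟨monomial c (1 : K), hc⟩ : ↥(maxIdeal K n ^ k * I)) ∈ g.deg (fun i => (c i : ℤ))) →
        stanleyDepth g = 1 := by
  classical
  obtain ⟨G, hG⟩ := hmono
  obtain ⟨G₀, hG₀fin, hG₀sub, hG₀span⟩ := exists_finite_gen I G hG
  have hG₀ne : G₀.Nonempty := by
    by_contra hne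
    rw [Set.not_nonempty_iff_eq_empty] at hne
    rw [hne, Set.image_empty, Ideal.span_empty] at hG₀span
    exact hI hG₀span
  set δ := sInf (dg '' G₀) with hδdef
  have hδmem : δ ∈ dg '' G₀ := Nat.sInf_mem (hG₀ne.image dg)
  obtain ⟨γs, hγsG, hγsdg⟩ := hδmem
  have hδle : ∀ γ ∈ G₀, δ ≤ dg γ := fun γ hγ => Nat.sInf_le ⟨γ, hγ, rfl⟩
  obtain ⟨B, hB⟩ : ∃ B, ∀ γ ∈ G₀, dg γ ≤ B := by
    obtain ⟨B, hB⟩ := (hG₀fin.image dg).bddAbove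
    exact ⟨B, fun γ hγ => hB ⟨γ, hγ, rfl⟩⟩
  obtain ⟨N₀, hN₀⟩ := binom_bound (n-1) (δ+1)
  refine ⟨N₀ + 1, fun k hk g hg => ?_⟩
  have hk1 : 1 ≤ k := by omega
  have hEchar : ∀ e, monomial e (1:K) ∈ maxIdeal K n ^ k * I ↔
      ∃ γ ∈ G₀, γ ≤ e ∧ dg γ + k ≤ dg e := by
    intro e
    rw [hG₀span]
    exact maxIdeal_pow_mul_mem_iff hn k G₀ e
  have hJmono : ∀ p ∈ maxIdeal K n ^ k * I, ∀ e ∈ p.support,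
      monomial e (1:K) ∈ maxIdeal K n ^ k * I := by
    rw [hG₀span]
    exact maxIdeal_pow_mul_monoSupp hn k G₀
  -- Part I : a decomposition with all direction sets nonempty
  obtain ⟨ι, hι, c, Z, hZne, hcE, hcov, hdisj⟩ :=
    exists_partition hn {e | monomial e (1:K) ∈ maxIdeal K n ^ k * I} G₀ k B hk1
      (fun e => hEchar e) hB
  obtain ⟨D₀, hD₀⟩ := exists_good_decomposition hJmono g hg ι c Z hZne
    (fun i => hcE i) (fun e he => hcov e he) hdisj
  -- Part II : every decomposition has a small face
  have hnum : ((k + δ + 1) + (n-1)).choose (n-1) < 2 * ((k + (n-1)).choose (n-1)) := by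
    have h := hN₀ k (by omega)
    rw [show k + (δ+1) + (n-1) = k + δ + 1 + (n-1) from by omega] at h
    exact h
  have hsmall : ∀ D : StanleyDecomposition g, ∃ i, (D.Z i).card ≤ 1 := fun D =>
    decomposition_not_deep hn hJmono g hg G₀ k δ hEchar ⟨γs, hγsG, hγsdg⟩ hδle hnum D
  -- conclusion
  unfold stanleyDepth
  apply le_antisymm
  · apply iSup_le
    intro D
    obtain ⟨i, hi⟩ := hsmall D
    unfold StanleyDecomposition.sdepth
    refine le_trans (iInf_le _ i) ?_
    exact_mod_cast hi
  · refine le_trans ?_ (le_iSup _ D₀)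
    unfold StanleyDecomposition.sdepth
    refine le_iInf fun i => ?_
    have hpos := (hD₀ i).card_pos
    exact_mod_cast hpos
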